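/- Let n ≥ 1, let ρ₁, …, ρₙ ∈ (0,1) be pairwise distinct real numbers, let r ∈ {1,…,n}, and let x ∈ ℂ with |x| < 1. Then the series Σ_{k≥0} ((−1)ⁿ x)^k / (Γ(1−ρ_r−k)ⁿ · k! · ∏_{i≠r} Γ(1+ρ_r−ρ_i+k)) converges absolutely and equals (Γ(1−ρ_r)ⁿ · ∏_{i≠r} Γ(1+ρ_r−ρ_i))^{−1} · ₙF_{n−1}(ρ_r,…,ρ_r; 1+ρ_r−ρ₁, …, 1+ρ_r−ρₙ (the entry for i = r omitted); x), where the right-hand hypergeometric series is Σ_{k≥0} ((ρ_r)_k)ⁿ / (k! · ∏_{i≠r}(1+ρ_r−ρ_i)_k) · x^k. (This evaluates the GKZ Γ-series Φ_{𝕃,γ^{I_{n+r}}} in the convergence direction ν^{I_{n+r}} of the cone 𝒞₋, giving the local solutions at t = ∞.) -/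

import Mathlib

open Polynomial Finset
open Filter Topology

lemma asc_eval_prod (k : ℕ) (a : ℂ) :
    (ascPochhammer ℂ k).eval a = ∏ j ∈ range k, (a + j) := by
  induction k with
  | zero => simp
  | succ k ih => rw [ascPochhammer_succ_eval, prod_range_succ, ih]

lemma gamma_shift (a : ℂ) (h : ∀ j : ℕ, a + j ≠ 0) (k : ℕ) :
    Complex.Gamma (a + k) = Complex.Gamma a * (ascPochhammer ℂ k).eval a := by
  induction k with
  | zero => simp
  | succ k ih =>
      have : a + (k + 1 : ℕ) = (a + k) + 1 := by push_cast; ring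
      rw [this, Complex.Gamma_add_one _ (h k), ih, ascPochhammer_succ_eval]
      ring

lemma tendsto_shift_ratio (a b : ℂ) :
    Tendsto (fun k : ℕ => (a + k) / (b + k)) atTop (𝓝 1) := by
  have hnorm : Tendsto (fun k : ℕ => ‖b + (k : ℂ)‖) atTop atTop := by
    apply tendsto_atTop_mono (f := fun k : ℕ => (k : ℝ) - ‖b‖)
    · intro k
      calc (k : ℝ) - ‖b‖ = ‖(k : ℂ)‖ - ‖b‖ := by simp
        _ ≤ ‖b + (k : ℂ)‖ := by
            have := norm_sub_norm_le (k : ℂ) (-b)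
            simpa [sub_neg_eq_add, add_comm] using this
    · exact tendsto_atTop_add_const_right _ _ tendsto_natCast_atTop_atTop
  have h0 : Tendsto (fun k : ℕ => (a - b) / (b + k)) atTop (𝓝 0) := by
    rw [tendsto_zero_iff_norm_tendsto_zero]
    simp only [norm_div]
    exact Tendsto.div_atTop tendsto_const_nhds hnorm
  have hne : ∀ᶠ k : ℕ in atTop, b + (k : ℂ) ≠ 0 := by
    filter_upwards [hnorm.eventually_gt_atTop 0] with k hk
    exact fun h => by simp [h] at hk
  have : Tendsto (fun k : ℕ => 1 + (a - b) / (b + k)) atTop (𝓝 (1 + 0)) :=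
    tendsto_const_nhds.add h0
  rw [add_zero] at this
  refine this.congr' ?_
  filter_upwards [hne] with k hk
  field_simp
  ring

lemma my_ne_zero_of_re_pos {z : ℂ} (h : 0 < z.re) : z ≠ 0 := fun h0 => by simp [h0] at h

lemma gamma_reflect_shift (t : ℝ) (h0 : 0 < t) (h1 : t < 1) (k : ℕ) :
    Complex.Gamma (1 - (t : ℂ)) =
      Complex.Gamma (1 - (t : ℂ) - (k : ℂ)) *
        ((-1) ^ k * (ascPochhammer ℂ k).eval (t : ℂ)) := by
  have ha : ∀ j : ℕ, (1 - (t : ℂ) - (k : ℂ)) + (j : ℂ) ≠ 0 := by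
    intro j h
    have hre : 1 - t - (k : ℝ) + (j : ℝ) = 0 := by
      have := congrArg Complex.re h
      simpa using this
    have ht : t = ((1 + (j : ℤ) - (k : ℤ) : ℤ) : ℝ) := by push_cast; linarith
    have h0' : (0 : ℝ) < ((1 + (j : ℤ) - (k : ℤ) : ℤ) : ℝ) := ht ▸ h0
    have h1' : ((1 + (j : ℤ) - (k : ℤ) : ℤ) : ℝ) < 1 := ht ▸ h1
    have h0i : (0 : ℤ) < 1 + (j : ℤ) - (k : ℤ) := by exact_mod_cast h0'
    have h1i : (1 + (j : ℤ) - (k : ℤ)) < 1 := by exact_mod_cast h1'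
    omega
  have key := gamma_shift (1 - (t : ℂ) - (k : ℂ)) ha k
  have hsum : (1 - (t : ℂ) - (k : ℂ)) + (k : ℂ) = 1 - (t : ℂ) := by ring
  rw [hsum] at key
  rw [key]
  congr 1
  rw [asc_eval_prod, asc_eval_prod]
  have hcongr : ∀ j ∈ range k, (1 - (t : ℂ) - (k : ℂ) + (j : ℂ)) =
      -((t : ℂ) + ((k - 1 - j : ℕ) : ℂ)) := by
    intro j hj
    rw [mem_range] at hj
    have : ((k - 1 - j : ℕ) : ℂ) = (k : ℂ) - 1 - (j : ℂ) := by
      have : (k - 1 - j : ℕ) = k - 1 - j := rfl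
      push_cast [Nat.cast_sub (by omega : j ≤ k - 1), Nat.cast_sub (by omega : 1 ≤ k)]
      ring
    rw [this]; ring
  rw [prod_congr rfl hcongr]
  have := prod_range_reflect (fun j : ℕ => -((t : ℂ) + (j : ℂ))) k
  rw [this]
  calc ∏ j ∈ range k, -((t : ℂ) + (j : ℂ))
      = ∏ j ∈ range k, (-1 : ℂ) * ((t : ℂ) + (j : ℂ)) := by
        refine prod_congr rfl fun j _ => by ring
    _ = (-1) ^ k * ∏ j ∈ range k, ((t : ℂ) + (j : ℂ)) := by
        rw [prod_mul_distrib, prod_const, card_range]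

lemma alg_key (n k : ℕ) (G A F B E X : ℂ) (hG : G ≠ 0) (hA : A ≠ 0) (hF : F ≠ 0)
    (hB : B ≠ 0) (hE : E ≠ 0) :
    ((-1) ^ n * X) ^ k / ((G / ((-1) ^ k * A)) ^ n * F * (B * E)) =
      (G ^ n * B)⁻¹ * (A ^ n / (F * E) * X ^ k) := by
  have hsign : ((-1 : ℂ) ^ k) ^ n * ((-1 : ℂ) ^ n) ^ k = 1 := by
    rw [← pow_mul, ← pow_mul, mul_comm n k, ← pow_add, ← two_mul, pow_mul]
    norm_num
  have hm1 : ((-1 : ℂ) ^ k) ≠ 0 := pow_ne_zero _ (neg_ne_zero.mpr one_ne_zero)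
  rw [mul_pow, div_pow, mul_pow]
  field_simp
  rw [show ((-1 : ℂ) ^ n) ^ k * X ^ k * ((-1 : ℂ) ^ k) ^ n =
    (((-1 : ℂ) ^ k) ^ n * ((-1 : ℂ) ^ n) ^ k) * X ^ k from by ring, hsign, one_mul]

lemma alg_rec (n : ℕ) (Pv S Fv Qv Rv K X Y : ℂ) (hF : Fv ≠ 0) (hQ : Qv ≠ 0)
    (hR : Rv ≠ 0) (hK : K ≠ 0) :
    (Pv * S) ^ n / ((K * Fv) * (Qv * Rv)) * (X * Y) =
      (Pv ^ n / (Fv * Qv) * X) * (Y * (S ^ n / (K * Rv))) := by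
  rw [mul_pow]
  field_simp


/-- The GKZ Γ-series `Φ_{𝕃,γ^{I_{n+r}}}` in the convergence direction `ν^{I_{n+r}}`
of the cone `𝒞₋`, giving the local solutions at `t = ∞`: for pairwise distinct
`ρ₁, …, ρₙ ∈ (0,1)`, `r ∈ {1,…,n}` and `|x| < 1`, the series
`Σ_{k≥0} ((-1)ⁿx)^k / (Γ(1-ρ_r-k)ⁿ·k!·∏_{i≠r}Γ(1+ρ_r-ρ_i+k))` converges absolutely
and equals `(Γ(1-ρ_r)ⁿ·∏_{i≠r}Γ(1+ρ_r-ρ_i))⁻¹` times the hypergeometric series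
`Σ_{k≥0} ((ρ_r)_k)ⁿ/(k!·∏_{i≠r}(1+ρ_r-ρ_i)_k)·x^k`. -/
theorem gamma_series_at_infinity (n : ℕ) (hn : 1 ≤ n) (ρ : Fin n → ℝ)
    (hρ : ∀ i, ρ i ∈ Set.Ioo (0 : ℝ) 1) (hdist : Function.Injective ρ)
    (r : Fin n) (x : ℂ) (hx : ‖x‖ < 1) :
    Summable (fun k : ℕ => ((-1) ^ n * x) ^ k /
      ((Complex.Gamma (1 - (ρ r : ℂ) - (k : ℂ))) ^ n * (k.factorial : ℂ) *
        ∏ i ∈ univ.erase r, Complex.Gamma (1 + (ρ r : ℂ) - (ρ i : ℂ) + (k : ℂ)))) ∧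
    ∑' k : ℕ, ((-1) ^ n * x) ^ k /
        ((Complex.Gamma (1 - (ρ r : ℂ) - (k : ℂ))) ^ n * (k.factorial : ℂ) *
          ∏ i ∈ univ.erase r, Complex.Gamma (1 + (ρ r : ℂ) - (ρ i : ℂ) + (k : ℂ))) =
      ((Complex.Gamma (1 - (ρ r : ℂ))) ^ n *
          ∏ i ∈ univ.erase r, Complex.Gamma (1 + (ρ r : ℂ) - (ρ i : ℂ)))⁻¹ *
        ∑' k : ℕ, ((ascPochhammer ℂ k).eval ((ρ r : ℂ))) ^ n /
          ((k.factorial : ℂ) *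
            ∏ i ∈ univ.erase r, (ascPochhammer ℂ k).eval (1 + (ρ r : ℂ) - (ρ i : ℂ))) *
          x ^ k := by
  obtain ⟨hr0, hr1⟩ := hρ r
  -- abbreviations
  set P : ℕ → ℂ := fun k => (ascPochhammer ℂ k).eval ((ρ r : ℂ)) with hP
  set Q : ℕ → ℂ := fun k =>
    ∏ i ∈ univ.erase r, (ascPochhammer ℂ k).eval (1 + (ρ r : ℂ) - (ρ i : ℂ)) with hQ
  set f : ℕ → ℂ := fun k => P k ^ n / ((k.factorial : ℂ) * Q k) * x ^ k with hf
  set C : ℂ := (Complex.Gamma (1 - (ρ r : ℂ))) ^ n *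
      ∏ i ∈ univ.erase r, Complex.Gamma (1 + (ρ r : ℂ) - (ρ i : ℂ)) with hC
  -- nonvanishing facts
  have hpj : ∀ j : ℕ, ((ρ r : ℂ) + (j : ℂ)) ≠ 0 := by
    intro j
    apply my_ne_zero_of_re_pos
    simp only [Complex.add_re, Complex.ofReal_re, Complex.natCast_re]
    positivity
  have hqj : ∀ i : Fin n, ∀ j : ℕ, (1 + (ρ r : ℂ) - (ρ i : ℂ) + (j : ℂ)) ≠ 0 := by
    intro i j
    apply my_ne_zero_of_re_pos
    simp only [Complex.add_re, Complex.sub_re, Complex.one_re, Complex.ofReal_re,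
      Complex.natCast_re]
    have := (hρ i).2
    have : (0:ℝ) < 1 + ρ r - ρ i := by linarith
    have hj : (0:ℝ) ≤ (j : ℝ) := Nat.cast_nonneg j
    linarith
  have hPk : ∀ k, P k ≠ 0 := by
    intro k
    rw [hP]
    simp only
    rw [asc_eval_prod]
    exact prod_ne_zero_iff.mpr fun j _ => hpj j
  have hQik : ∀ i : Fin n, ∀ k : ℕ,
      (ascPochhammer ℂ k).eval (1 + (ρ r : ℂ) - (ρ i : ℂ)) ≠ 0 := by
    intro i k
    rw [asc_eval_prod]
    exact prod_ne_zero_iff.mpr fun j _ => hqj i j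
  have hQk : ∀ k, Q k ≠ 0 := fun k => prod_ne_zero_iff.mpr fun i _ => hQik i k
  have hfact : ∀ k : ℕ, (k.factorial : ℂ) ≠ 0 := fun k =>
    Nat.cast_ne_zero.mpr k.factorial_ne_zero
  have hΓ1p : Complex.Gamma (1 - (ρ r : ℂ)) ≠ 0 := by
    apply Complex.Gamma_ne_zero_of_re_pos
    simp only [Complex.sub_re, Complex.one_re, Complex.ofReal_re]
    linarith
  have hΓqi : ∀ i : Fin n, Complex.Gamma (1 + (ρ r : ℂ) - (ρ i : ℂ)) ≠ 0 := by
    intro i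
    apply Complex.Gamma_ne_zero_of_re_pos
    simp only [Complex.add_re, Complex.sub_re, Complex.one_re, Complex.ofReal_re]
    have := (hρ i).2
    linarith
  have hrefl : ∀ k : ℕ, Complex.Gamma (1 - (ρ r : ℂ)) =
      Complex.Gamma (1 - (ρ r : ℂ) - (k : ℂ)) * ((-1) ^ k * P k) :=
    fun k => gamma_reflect_shift (ρ r) hr0 hr1 k
  have hΓ1pk : ∀ k : ℕ, Complex.Gamma (1 - (ρ r : ℂ) - (k : ℂ)) ≠ 0 := by
    intro k h
    rw [hrefl k, h, zero_mul] at hΓ1p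
    exact hΓ1p rfl
  have hΓshift : ∀ k : ℕ, ∀ i ∈ univ.erase r,
      Complex.Gamma (1 + (ρ r : ℂ) - (ρ i : ℂ) + (k : ℂ)) =
        Complex.Gamma (1 + (ρ r : ℂ) - (ρ i : ℂ)) *
          (ascPochhammer ℂ k).eval (1 + (ρ r : ℂ) - (ρ i : ℂ)) :=
    fun k i _ => gamma_shift _ (hqj i) k
  -- the termwise identity
  have hterm : ∀ k : ℕ, ((-1) ^ n * x) ^ k /
      ((Complex.Gamma (1 - (ρ r : ℂ) - (k : ℂ))) ^ n * (k.factorial : ℂ) *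
        ∏ i ∈ univ.erase r, Complex.Gamma (1 + (ρ r : ℂ) - (ρ i : ℂ) + (k : ℂ))) =
      C⁻¹ * f k := by
    intro k
    rw [prod_congr rfl (hΓshift k), prod_mul_distrib]
    have hΓval : Complex.Gamma (1 - (ρ r : ℂ) - (k : ℂ)) =
        Complex.Gamma (1 - (ρ r : ℂ)) / ((-1) ^ k * P k) := by
      rw [eq_div_iff (mul_ne_zero (pow_ne_zero _ (neg_ne_zero.mpr one_ne_zero)) (hPk k))]
      exact (hrefl k).symm
    rw [hΓval]
    exact alg_key n k _ _ _ _ _ x hΓ1p (hPk k) (hfact k)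
      (prod_ne_zero_iff.mpr fun i _ => hΓqi i)
      (prod_ne_zero_iff.mpr fun i _ => hQik i k)
  -- summability of the hypergeometric series
  have hsumf : Summable f := by
    by_cases hx0 : x = 0
    · apply summable_of_ne_finset_zero (s := ({0} : Finset ℕ))
      intro k hk
      have hk' : k ≠ 0 := by simpa using hk
      simp only [hf, hx0, zero_pow hk', mul_zero]
    · -- ratio test
      have hfk : ∀ k, f k ≠ 0 := by
        intro k
        exact mul_ne_zero (div_ne_zero (pow_ne_zero _ (hPk k))
          (mul_ne_zero (hfact k) (hQk k))) (pow_ne_zero _ hx0)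
      set g : ℕ → ℂ := fun k => ((ρ r : ℂ) + k) ^ n /
        ((1 + (k : ℂ)) * ∏ i ∈ univ.erase r, (1 + (ρ r : ℂ) - (ρ i : ℂ) + (k : ℂ))) with hg
      have hprod_ne : ∀ k : ℕ,
          (∏ i ∈ univ.erase r, (1 + (ρ r : ℂ) - (ρ i : ℂ) + (k : ℂ))) ≠ 0 :=
        fun k => prod_ne_zero_iff.mpr fun i _ => hqj i k
      have h1k : ∀ k : ℕ, (1 + (k : ℂ)) ≠ 0 := by
        intro k
        apply my_ne_zero_of_re_pos
        simp only [Complex.add_re, Complex.one_re, Complex.natCast_re]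
        positivity
      have hrec : ∀ k : ℕ, f (k + 1) = f k * (x * g k) := by
        intro k
        have e1 : P (k + 1) = P k * ((ρ r : ℂ) + (k : ℂ)) := by
          rw [hP]; exact ascPochhammer_succ_eval k ((ρ r : ℂ))
        have e2 : Q (k + 1) = Q k *
            ∏ i ∈ univ.erase r, (1 + (ρ r : ℂ) - (ρ i : ℂ) + (k : ℂ)) := by
          rw [hQ]
          simp only
          rw [← prod_mul_distrib]
          exact prod_congr rfl fun i _ => ascPochhammer_succ_eval k _
        have e3 : (((k + 1).factorial : ℕ) : ℂ) = (1 + (k : ℂ)) * (k.factorial : ℂ) := by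
          rw [Nat.factorial_succ]; push_cast; ring
        rw [hf, hg]
        simp only
        rw [e1, e2, e3, pow_succ]
        exact alg_rec n (P k) _ _ (Q k) _ _ (x ^ k) x (hfact k) (hQk k) (hprod_ne k) (h1k k)
      have hgeq : ∀ k : ℕ, g k = (((ρ r : ℂ) + k) / (1 + k)) *
          ∏ i ∈ univ.erase r, (((ρ r : ℂ) + k) / (1 + (ρ r : ℂ) - (ρ i : ℂ) + (k : ℂ))) := by
        intro k
        rw [prod_div_distrib, prod_const, card_erase_of_mem (mem_univ r)]
        rw [hg]
        simp only [card_univ, Fintype.card_fin]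
        rw [div_mul_div_comm, ← pow_succ']
        congr 2
        omega
      have hgt : Tendsto g atTop (𝓝 1) := by
        have := (tendsto_shift_ratio ((ρ r : ℂ)) 1).mul
          (tendsto_finset_prod (f := fun i k => (((ρ r : ℂ) + (k : ℕ)) /
              (1 + (ρ r : ℂ) - (ρ i : ℂ) + (k : ℕ)))) (a := fun _ => (1 : ℂ))
            (univ.erase r) (fun i _ => tendsto_shift_ratio ((ρ r : ℂ)) (1 + (ρ r : ℂ) - (ρ i : ℂ))))
        simp only [prod_const_one, mul_one] at this
        exact Tendsto.congr (fun k => (hgeq k).symm) this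
      apply summable_of_ratio_test_tendsto_lt_one (l := ‖x‖)
        hx (Eventually.of_forall hfk)
      have : Tendsto (fun k : ℕ => ‖x‖ * ‖g k‖) atTop (𝓝 (‖x‖ * ‖(1 : ℂ)‖)) :=
        tendsto_const_nhds.mul hgt.norm
      simp only [norm_one, mul_one] at this
      refine this.congr fun k => ?_
      rw [hrec k, norm_mul (f k) (x * g k),
        mul_div_cancel_left₀ _ (norm_ne_zero_iff.mpr (hfk k)), norm_mul]
  constructor
  · exact (hsumf.mul_left C⁻¹).congr fun k => (hterm k).symm
  · rw [tsum_congr hterm, tsum_mul_left]
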